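/- Let X be an integer-valued random variable with P[X > x] ~ q⁺Bx^{−α} and P[X < −x] ~ q⁻Bx^{−α} as x → ∞, where 1 < α < 2, B > 0, q⁺+q⁻ = 1. Then the characteristic function φ(θ) = E[e^{iθX}] satisfies |φ′(θ) − φ′(θ′)| ≤ C|θ−θ′|^{α−1} for some constant C and all θ, θ′. -/

import Mathlib

set_option maxHeartbeats 1000000

open Filter Topology Finset

/-- Increment lower bound for concave power: `β x^(β-1) ≤ x^β - (x-1)^β` for `x ≥ 1`. -/
lemma aux1 {β : ℝ} (hβ0 : 0 < β) (hβ1 : β ≤ 1) {x : ℝ} (hx : 1 ≤ x) :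
    β * x ^ (β - 1) ≤ x ^ β - (x - 1) ^ β := by
  have hx0 : (0:ℝ) < x := lt_of_lt_of_le one_pos hx
  have hd1 : 1/x ≤ 1 := by rw [div_le_one hx0]; exact hx
  have hd0 : 0 < 1/x := one_div_pos.mpr hx0
  have h1 : (1 - 1/x) ^ β ≤ 1 - β * (1/x) := by
    have := rpow_one_add_le_one_add_mul_self (s := -(1/x)) (p := β)
      (by linarith) hβ0.le hβ1
    simpa [sub_eq_add_neg, mul_neg] using this
  have h2 : (x - 1) ^ β = (1 - 1/x) ^ β * x ^ β := by
    rw [← Real.mul_rpow (by nlinarith) hx0.le]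
    congr 1
    field_simp
  have h3 : x ^ (β - 1) = x ^ β / x := by
    rw [Real.rpow_sub hx0, Real.rpow_one]
  have hxb : 0 ≤ x ^ β := Real.rpow_nonneg hx0.le β
  rw [h2, h3]
  have h4 : (1 - 1/x) ^ β * x ^ β ≤ (1 - β * (1/x)) * x ^ β :=
    mul_le_mul_of_nonneg_right h1 hxb
  have h5 : (1 - β * (1/x)) * x ^ β = x ^ β - β * (x ^ β / x) := by
    field_simp
  nlinarith [h4]

/-- Increment bound for convex negative power. -/
lemma aux2 {α : ℝ} (hα : 1 < α) (hα2 : α < 2) {x : ℝ} (hx : 1 ≤ x) :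
    (α - 1) * (x + 1) ^ (-α) ≤ x ^ (1 - α) - (x + 1) ^ (1 - α) := by
  have hx0 : (0:ℝ) < x := lt_of_lt_of_le one_pos hx
  have hx1 : (0:ℝ) < x + 1 := by linarith
  set γ : ℝ := α - 1 with hγ
  have hγ0 : 0 < γ := by rw [hγ]; linarith
  have hγ1 : γ ≤ 1 := by rw [hγ]; linarith
  have hd1 : 1/(x+1) ≤ 1 := by rw [div_le_one hx1]; linarith
  have hd0 : 0 < 1/(x+1) := one_div_pos.mpr hx1
  have hber : (1 - 1/(x+1)) ^ γ ≤ 1 - γ * (1/(x+1)) := by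
    have := rpow_one_add_le_one_add_mul_self (s := -(1/(x+1))) (p := γ)
      (by linarith) hγ0.le hγ1
    simpa [sub_eq_add_neg, mul_neg] using this
  have hxx : (1 - 1/(x+1)) = x / (x+1) := by field_simp; ring
  set a : ℝ := x ^ γ with ha
  set b : ℝ := (x+1) ^ γ with hb
  have ha0 : 0 < a := Real.rpow_pos_of_pos hx0 γ
  have hb0 : 0 < b := Real.rpow_pos_of_pos hx1 γ
  have hab : a ≤ b := Real.rpow_le_rpow hx0.le (by linarith) hγ0.le
  have hdiv : (x/(x+1)) ^ γ = a / b := Real.div_rpow hx0.le hx1.le γ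
  have hkey : a / b ≤ 1 - γ / (x+1) := by
    rw [hxx, hdiv] at hber
    simpa [div_eq_mul_inv, one_div] using hber
  have hkey2 : a * (x+1) ≤ b * (x + 1 - γ) := by
    rw [div_le_iff₀ hb0] at hkey
    have h6 := mul_le_mul_of_nonneg_right hkey hx1.le
    calc a * (x+1) ≤ ((1 - γ/(x+1)) * b) * (x+1) := h6
      _ = b * (x + 1 - γ) := by field_simp
  have e1 : x ^ (1-α) = a⁻¹ := by
    rw [ha, ← Real.rpow_neg hx0.le]; congr 1; rw [hγ]; ring
  have e2 : (x+1) ^ (1-α) = b⁻¹ := by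
    rw [hb, ← Real.rpow_neg hx1.le]; congr 1; rw [hγ]; ring
  have e3 : (x+1) ^ (-α) = (b * (x+1))⁻¹ := by
    rw [hb, ← Real.rpow_add_one hx1.ne', ← Real.rpow_neg hx1.le]
    congr 1; rw [hγ]; ring
  rw [e1, e2, e3]
  have hg1 : γ * (b*(x+1))⁻¹ = γ / (b*(x+1)) := by ring
  have hg2 : a⁻¹ - b⁻¹ = (b - a)/(a*b) := by field_simp
  have hg3 : γ / (b*(x+1)) ≤ (b - a)/(a*b) := by
    rw [div_le_div_iff₀ (by positivity) (by positivity)]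
    have k1 : γ * b ≤ (b - a) * (x+1) := by nlinarith [hkey2]
    nlinarith [mul_le_mul_of_nonneg_right k1 hb0.le,
      mul_le_mul_of_nonneg_left hab (mul_pos hγ0 hb0).le]
  linarith [hg1 ▸ hg2 ▸ hg3]

/-- Finite sum bound `∑_{n<N} (n+1)^(1-α) ≤ N^(2-α)/(2-α)`. -/
lemma lemL1 {α : ℝ} (hα : 1 < α) (hα2 : α < 2) (N : ℕ) :
    ∑ n ∈ range N, ((n:ℝ)+1) ^ (1-α) ≤ (N:ℝ) ^ (2-α) / (2-α) := by
  induction N with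
  | zero => simp [Real.zero_rpow (by linarith : (2:ℝ)-α ≠ 0)]
  | succ N ih =>
    rw [Finset.sum_range_succ]
    have h1 : (2-α) * ((N:ℝ)+1) ^ ((2-α)-1) ≤ ((N:ℝ)+1) ^ (2-α) - (((N:ℝ)+1) - 1) ^ (2-α) :=
      aux1 (by linarith) (by linarith) (by linarith [Nat.cast_nonneg (α := ℝ) N])
    have hβ : (0:ℝ) < 2 - α := by linarith
    have h2 : ((N:ℝ)+1) ^ (1-α) ≤ (((N:ℝ)+1) ^ (2-α) - (N:ℝ) ^ (2-α)) / (2-α) := by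
      rw [le_div_iff₀ hβ]
      have e : ((N:ℝ)+1) ^ (1-α) = ((N:ℝ)+1) ^ ((2-α)-1) := by congr 1; ring
      have e2 : ((N:ℝ)+1) - 1 = (N:ℝ) := by ring
      rw [e2] at h1
      rw [e]
      linarith
    push_cast
    calc ∑ n ∈ range N, ((n:ℝ)+1) ^ (1-α) + ((N:ℝ)+1) ^ (1-α)
        ≤ (N:ℝ) ^ (2-α) / (2-α) + (((N:ℝ)+1) ^ (2-α) - (N:ℝ) ^ (2-α)) / (2-α) :=
          add_le_add ih h2
      _ = ((N:ℝ)+1) ^ (2-α) / (2-α) := by rw [← add_div]; congr 1; ring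

/-- Finite tail sum bound `∑_{N ≤ n < M} (n+1)^(-α) ≤ N^(1-α)/(α-1)`. -/
lemma lemL2 {α : ℝ} (hα : 1 < α) (hα2 : α < 2) {N : ℕ} (hN : 1 ≤ N) (M : ℕ) :
    ∑ n ∈ Finset.Ico N M, ((n:ℝ)+1) ^ (-α) ≤ (N:ℝ) ^ (1-α) / (α-1) := by
  have hα1 : (0:ℝ) < α - 1 := by linarith
  have hNR : (1:ℝ) ≤ (N:ℝ) := by exact_mod_cast hN
  rcases le_or_gt M N with hMN | hNM
  · rw [Finset.Ico_eq_empty (by omega)]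
    simp
    positivity
  · have main : ∀ M, N ≤ M → ∑ n ∈ Finset.Ico N M, ((n:ℝ)+1) ^ (-α)
        ≤ ((N:ℝ) ^ (1-α) - (M:ℝ) ^ (1-α)) / (α-1) := by
      intro M
      induction M with
      | zero => intro h; interval_cases N
      | succ M ih =>
        intro hNM1
        rcases Nat.lt_or_ge M N with h | h
        · have : N = M + 1 := by omega
          subst this
          simp
        · have hMR : (1:ℝ) ≤ (M:ℝ) := le_trans hNR (by exact_mod_cast h)
          rw [Finset.sum_Ico_succ_top h]
          have h1 := aux2 hα hα2 hMR
          have h2 := ih h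
          have h3 : ((M:ℝ)+1) ^ (-α) ≤ ((M:ℝ) ^ (1-α) - ((M:ℝ)+1) ^ (1-α)) / (α-1) := by
            rw [le_div_iff₀ hα1]; linarith
          push_cast
          calc ∑ n ∈ Finset.Ico N M, ((n:ℝ)+1) ^ (-α) + ((M:ℝ)+1) ^ (-α)
              ≤ ((N:ℝ) ^ (1-α) - (M:ℝ) ^ (1-α)) / (α-1)
                + ((M:ℝ) ^ (1-α) - ((M:ℝ)+1) ^ (1-α)) / (α-1) := add_le_add h2 h3
            _ = ((N:ℝ) ^ (1-α) - ((M:ℝ)+1) ^ (1-α)) / (α-1) := by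
                rw [← add_div]; congr 1; ring
    have := main M hNM.le
    have hM0 : (0:ℝ) ≤ (M:ℝ) ^ (1-α) := Real.rpow_nonneg (Nat.cast_nonneg M) _
    calc ∑ n ∈ Finset.Ico N M, ((n:ℝ)+1) ^ (-α) ≤ ((N:ℝ) ^ (1-α) - (M:ℝ) ^ (1-α)) / (α-1) := this
      _ ≤ (N:ℝ) ^ (1-α) / (α-1) := by
          gcongr
          linarith

/-- Increment bound for `t ↦ t · min(2, ht)`. -/
lemma incr_bound {h : ℝ} (h0 : 0 < h) (h1 : h ≤ 1) {t : ℝ} (ht : 0 ≤ t) :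
    (t+1) * min 2 (h*(t+1)) - t * min 2 (h*t) ≤ 6 * min 1 (h*(t+1)) := by
  rcases le_or_gt (h*(t+1)) 2 with c1 | c1
  · have c1' : h*t ≤ 2 := by nlinarith
    rw [min_eq_right c1, min_eq_right c1']
    rcases le_or_gt (h*(t+1)) 1 with c2 | c2
    · rw [min_eq_right c2]; nlinarith
    · rw [min_eq_left c2.le]; nlinarith
  · rw [min_eq_left c1.le, min_eq_left (by nlinarith : (1:ℝ) ≤ h*(t+1))]
    rcases le_or_gt 2 (h*t) with c3 | c3
    · rw [min_eq_left c3]; nlinarith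
    · rw [min_eq_right c3.le]
      nlinarith [mul_le_mul_of_nonneg_right (le_of_lt (show 2 < h*t + h by nlinarith)) ht]

/-- Telescoping: `m · min(2, hm) ≤ ∑_{n<m} 6·min(1, h(n+1))`. -/
lemma g_le {h : ℝ} (h0 : 0 < h) (h1 : h ≤ 1) (m : ℕ) :
    (m:ℝ) * min 2 (h*(m:ℝ)) ≤ ∑ n ∈ range m, 6 * min 1 (h*((n:ℝ)+1)) := by
  induction m with
  | zero => simp
  | succ m ih =>
    rw [Finset.sum_range_succ]
    have := incr_bound h0 h1 (Nat.cast_nonneg (α := ℝ) m)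
    push_cast
    linarith

/-- `‖e^{iθx} - e^{iθ'x}‖ ≤ min(2, 2|θ-θ'| |x|)`. -/
lemma expdiff (θ θ' : ℝ) (x : ℤ) :
    ‖Complex.exp (Complex.I*θ*x) - Complex.exp (Complex.I*θ'*x)‖
      ≤ min 2 (2*|θ-θ'| * (x.natAbs:ℝ)) := by
  have hn : ∀ s : ℝ, ‖Complex.exp (Complex.I*s*x)‖ = 1 := by
    intro s
    have : Complex.I*s*x = ((s*x : ℝ) : ℂ) * Complex.I := by push_cast; ring
    rw [this, Complex.norm_exp_ofReal_mul_I]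
  have hfac : Complex.exp (Complex.I*θ*x) - Complex.exp (Complex.I*θ'*x)
      = Complex.exp (Complex.I*θ'*x) * (Complex.exp (Complex.I*((θ-θ' : ℝ):ℂ)*x) - 1) := by
    rw [mul_sub, mul_one, ← Complex.exp_add]
    congr 2
    push_cast
    ring
  have habs : ‖Complex.I*((θ-θ' : ℝ):ℂ)*x‖ = |θ-θ'| * (x.natAbs:ℝ) := by
    rw [norm_mul, norm_mul, Complex.norm_I, one_mul, Complex.norm_real, Real.norm_eq_abs,
      Complex.norm_intCast, Nat.cast_natAbs, Int.cast_abs]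
  refine le_min ?_ ?_
  · calc ‖Complex.exp (Complex.I*θ*x) - Complex.exp (Complex.I*θ'*x)‖
        ≤ ‖Complex.exp (Complex.I*θ*x)‖ + ‖Complex.exp (Complex.I*θ'*x)‖ := norm_sub_le _ _
      _ = 2 := by rw [hn, hn]; norm_num
  · rw [hfac, norm_mul, hn, one_mul]
    rcases le_or_gt (|θ-θ'| * (x.natAbs:ℝ)) 1 with hc | hc
    · have h2 := Complex.norm_exp_sub_one_le (x := Complex.I*((θ-θ' : ℝ):ℂ)*x)
        (by rw [habs]; exact hc)
      rw [habs] at h2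
      calc ‖Complex.exp (Complex.I*((θ-θ' : ℝ):ℂ)*x) - 1‖
          = ‖Complex.exp (Complex.I*((θ-θ' : ℝ):ℂ)*x) - 1‖ := rfl
        _ ≤ 2 * (|θ-θ'| * (x.natAbs:ℝ)) := h2
        _ = 2*|θ-θ'| * (x.natAbs:ℝ) := by ring
    · calc ‖Complex.exp (Complex.I*((θ-θ' : ℝ):ℂ)*x) - 1‖
          ≤ ‖Complex.exp (Complex.I*((θ-θ' : ℝ):ℂ)*x)‖ + ‖(1:ℂ)‖ := norm_sub_le _ _
        _ = 2 := by rw [hn (θ-θ')]; norm_num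
        _ ≤ 2*|θ-θ'| * (x.natAbs:ℝ) := by nlinarith

/-- The characteristic function `φ(θ) = E[e^{iθX}] = Σ_x p(x) e^{iθx}`. -/
noncomputable def rwChar (p : ℤ → ℝ) (θ : ℝ) : ℂ :=
  ∑' x : ℤ, (p x : ℂ) * Complex.exp (Complex.I * θ * x)

/-- If `X` is ℤ-valued with `P[X > x] ~ q⁺ B x^{−α}`, `P[X < −x] ~ q⁻ B x^{−α}`
(`1 < α < 2`, `B > 0`, `q⁺ + q⁻ = 1`), then `φ′` is Hölder of order `α − 1`:
`|φ′(θ) − φ′(θ′)| ≤ C |θ − θ′|^{α−1}`. -/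
theorem stmt11 (p : ℤ → ℝ) (α B qp qm : ℝ)
    (hα : 1 < α) (hα2 : α < 2) (hB : 0 < B)
    (hqp : 0 ≤ qp) (hqm : 0 ≤ qm) (hq : qp + qm = 1)
    (hp0 : ∀ x, 0 ≤ p x) (hp1 : HasSum p 1)
    (htailp : Tendsto (fun x : ℝ => (∑' y : ℤ, if x < (y : ℝ) then p y else 0) * x ^ α)
      atTop (𝓝 (qp * B)))
    (htailm : Tendsto (fun x : ℝ => (∑' y : ℤ, if (y : ℝ) < -x then p y else 0) * x ^ α)
      atTop (𝓝 (qm * B))) :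
    ∃ C : ℝ, ∀ θ θ' : ℝ,
      ‖deriv (rwChar p) θ - deriv (rwChar p) θ'‖ ≤ C * |θ - θ'| ^ (α - 1) := by
  have hsump : Summable p := hp1.summable
  have htsump : ∑' x, p x = 1 := hp1.tsum_eq
  -- summability of conditional sums
  have sumite : ∀ (Q : ℤ → Prop) (_ : DecidablePred Q),
      Summable (fun x : ℤ => if Q x then p x else 0) := by
    intro Q _
    apply hsump.of_nonneg_of_le
    · intro x; split <;> [exact hp0 x; exact le_refl 0]
    · intro x; split <;> [exact le_refl _; exact hp0 x]
  have ite_nonneg : ∀ (Q : ℤ → Prop) (_ : DecidablePred Q) (x : ℤ),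
      0 ≤ if Q x then p x else 0 := by
    intro Q _ x; split <;> [exact hp0 x; exact le_refl 0]
  -- the two-sided tail
  set T : ℕ → ℝ := fun n => ∑' x : ℤ, if n < x.natAbs then p x else 0 with hTdef
  have sumT : ∀ n : ℕ, Summable (fun x : ℤ => if n < x.natAbs then p x else 0) :=
    fun n => sumite _ _
  have T0 : ∀ n, 0 ≤ T n := fun n => tsum_nonneg (ite_nonneg _ _)
  have Tle1 : ∀ n, T n ≤ 1 := by
    intro n
    rw [hTdef, ← htsump]
    apply Summable.tsum_le_tsum _ (sumT n) hsump
    intro x; split <;> [exact le_refl _; exact hp0 x]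
  -- eventual tail bounds
  obtain ⟨a₁, ha₁⟩ := eventually_atTop.mp
    (htailp.eventually (eventually_le_nhds (lt_add_one (qp * B))))
  obtain ⟨a₂, ha₂⟩ := eventually_atTop.mp
    (htailm.eventually (eventually_le_nhds (lt_add_one (qm * B))))
  set c : ℝ := max 1 (max a₁ a₂) with hcdef
  have hc1 : (1:ℝ) ≤ c := le_max_left _ _
  set K₀ : ℝ := (qp*B+1) + (qm*B+1) + c ^ α with hK₀def
  have hcα1 : (1:ℝ) ≤ c ^ α := Real.one_le_rpow hc1 (by linarith)
  have hK₀1 : (1:ℝ) ≤ K₀ := by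
    have h1 : 0 ≤ qp*B := mul_nonneg hqp hB.le
    have h2 : 0 ≤ qm*B := mul_nonneg hqm hB.le
    rw [hK₀def]; linarith
  have hTbound : ∀ n : ℕ, 1 ≤ n → T n ≤ K₀ * (n:ℝ) ^ (-α) := by
    intro n hn
    have hn0 : (0:ℝ) < n := by exact_mod_cast hn
    have hnα : (0:ℝ) < (n:ℝ) ^ α := Real.rpow_pos_of_pos hn0 α
    have hnegα : (0:ℝ) < (n:ℝ) ^ (-α) := Real.rpow_pos_of_pos hn0 (-α)
    have hνα : (n:ℝ) ^ (-α) = ((n:ℝ) ^ α)⁻¹ := Real.rpow_neg hn0.le α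
    have hsplit : T n ≤ (∑' y : ℤ, if (n:ℝ) < (y:ℝ) then p y else 0)
        + (∑' y : ℤ, if (y:ℝ) < -(n:ℝ) then p y else 0) := by
      rw [hTdef]
      rw [← Summable.tsum_add (sumite _ _) (sumite _ _)]
      apply Summable.tsum_le_tsum _ (sumT n) ((sumite _ _).add (sumite _ _))
      intro x
      by_cases h1 : (n:ℝ) < (x:ℝ)
      · have hx : (n:ℤ) < x := by exact_mod_cast h1
        have : n < x.natAbs := by omega
        rw [if_pos this, if_pos h1]
        have hnn : (0:ℝ) ≤ (if (x:ℝ) < -(n:ℝ) then p x else 0) := by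
          split <;> [exact hp0 x; exact le_refl 0]
        linarith
      · by_cases h2 : (x:ℝ) < -(n:ℝ)
        · have hx : x < -(n:ℤ) := by exact_mod_cast h2
          have : n < x.natAbs := by omega
          rw [if_pos this, if_neg h1, if_pos h2]
          linarith
        · have hx1 : x ≤ (n:ℤ) := by exact_mod_cast not_lt.mp h1
          have hx2 : -(n:ℤ) ≤ x := by exact_mod_cast not_lt.mp h2
          have : ¬ (n < x.natAbs) := by omega
          rw [if_neg this, if_neg h1, if_neg h2]
          norm_num
    rcases le_or_gt c (n:ℝ) with hcn | hcn
    · have e₁ := ha₁ (n:ℝ) (le_trans (le_trans (le_max_left a₁ a₂) (le_max_right 1 _)) hcn)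
      have e₂ := ha₂ (n:ℝ) (le_trans (le_trans (le_max_right a₁ a₂) (le_max_right 1 _)) hcn)
      have b₁ : (∑' y : ℤ, if (n:ℝ) < (y:ℝ) then p y else 0) ≤ (qp*B+1) * (n:ℝ) ^ (-α) := by
        rw [hνα, mul_comm, ← div_eq_inv_mul, le_div_iff₀ hnα]
        linarith [e₁]
      have b₂ : (∑' y : ℤ, if (y:ℝ) < -(n:ℝ) then p y else 0) ≤ (qm*B+1) * (n:ℝ) ^ (-α) := by
        rw [hνα, mul_comm, ← div_eq_inv_mul, le_div_iff₀ hnα]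
        linarith [e₂]
      have : 0 ≤ c ^ α * (n:ℝ) ^ (-α) := by positivity
      rw [hK₀def]
      nlinarith [hsplit]
    · have hT1 := Tle1 n
      have h1cn : 1 ≤ c / (n:ℝ) := by
        rw [le_div_iff₀ hn0]; linarith
      have : (1:ℝ) ≤ (c/(n:ℝ)) ^ α := Real.one_le_rpow h1cn (by linarith)
      have hdr : (c/(n:ℝ)) ^ α = c ^ α * (n:ℝ) ^ (-α) := by
        rw [Real.div_rpow (by linarith : (0:ℝ) ≤ c) hn0.le, hνα, div_eq_mul_inv]
      rw [hdr] at this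
      have h1 : 0 ≤ (qp*B+1) * (n:ℝ) ^ (-α) := by positivity
      have h2 : 0 ≤ (qm*B+1) * (n:ℝ) ^ (-α) := by positivity
      rw [hK₀def]
      nlinarith
  -- shift to (n+1) form
  set K : ℝ := K₀ * 2 ^ α with hKdef
  have h2α1 : (1:ℝ) ≤ 2 ^ α := Real.one_le_rpow (by norm_num) (by linarith)
  have hK1 : (1:ℝ) ≤ K := by
    have h := mul_le_mul hK₀1 h2α1 zero_le_one (by linarith : (0:ℝ) ≤ K₀)
    rw [hKdef]; linarith
  have hK0 : (0:ℝ) ≤ K := by linarith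
  have hTK : ∀ n : ℕ, 1 ≤ n → T n ≤ K * ((n:ℝ)+1) ^ (-α) := by
    intro n hn
    have hn0 : (0:ℝ) < n := by exact_mod_cast hn
    have hn1 : (0:ℝ) < (n:ℝ)+1 := by linarith
    have hnr1 : (1:ℝ) ≤ (n:ℝ) := by exact_mod_cast hn
    have hstep : (n:ℝ) ^ (-α) ≤ 2 ^ α * ((n:ℝ)+1) ^ (-α) := by
      rw [Real.rpow_neg hn0.le, Real.rpow_neg hn1.le, inv_eq_one_div,
        mul_comm ((2:ℝ)^α), inv_eq_one_div, div_mul_eq_mul_div, one_mul,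
        div_le_div_iff₀ (Real.rpow_pos_of_pos hn0 α) (Real.rpow_pos_of_pos hn1 α), one_mul]
      calc ((n:ℝ)+1) ^ α ≤ ((2:ℝ)*n) ^ α :=
            Real.rpow_le_rpow hn1.le (by linarith) (by linarith)
        _ = 2 ^ α * (n:ℝ) ^ α := Real.mul_rpow (by norm_num) hn0.le
    calc T n ≤ K₀ * (n:ℝ) ^ (-α) := hTbound n hn
      _ ≤ K₀ * (2 ^ α * ((n:ℝ)+1) ^ (-α)) := by
          apply mul_le_mul_of_nonneg_left hstep (by linarith)
      _ = K * ((n:ℝ)+1) ^ (-α) := by rw [hKdef]; ring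
  -- the key finite sum estimate
  set C₁ : ℝ := K * (3/(2-α) + 1/(α-1)) with hC₁def
  have h2mα : (0:ℝ) < 2 - α := by linarith
  have hαm1 : (0:ℝ) < α - 1 := by linarith
  have hC₁0 : 0 ≤ C₁ := by
    rw [hC₁def]
    apply mul_nonneg hK0
    positivity
  have key : ∀ h : ℝ, 0 < h → h ≤ 1 → ∀ s : Finset ℤ,
      ∑ x ∈ s, p x * ((x.natAbs:ℝ) * min 2 (h*(x.natAbs:ℝ))) ≤ 6*C₁*h^(α-1) := by
    intro h h0 h1 s
    set N : ℕ := ⌈1/h⌉₊ with hNdef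
    have hN1 : 1 ≤ N := Nat.one_le_ceil_iff.mpr (by positivity)
    have hNle : 1/h ≤ (N:ℝ) := Nat.le_ceil _
    have h1h : (1:ℝ) ≤ 1/h := by rw [le_div_iff₀ h0]; linarith
    have hNup : (N:ℝ) + 1 ≤ 3/h := by
      have hc := Nat.ceil_lt_add_one (show (0:ℝ) ≤ 1/h by positivity)
      have h2h : (2:ℝ) ≤ 2/h := by rw [le_div_iff₀ h0]; linarith
      have e : 3/h = 1/h + 2/h := by ring
      rw [e]
      rw [hNdef]
      push_cast
      linarith
    set M : ℕ := s.sup Int.natAbs + 1 with hMdef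
    have hxM : ∀ x ∈ s, x.natAbs < M := by
      intro x hx
      rw [hMdef]
      exact Nat.lt_succ_of_le (Finset.le_sup hx)
    have stepA : ∀ x ∈ s, p x * ((x.natAbs:ℝ) * min 2 (h*(x.natAbs:ℝ)))
        ≤ ∑ n ∈ range M, (if n < x.natAbs then p x * (6 * min 1 (h*((n:ℝ)+1))) else 0) := by
      intro x hx
      have hsub : ∑ n ∈ range M, (if n < x.natAbs then p x * (6 * min 1 (h*((n:ℝ)+1))) else 0)
          = p x * ∑ n ∈ range x.natAbs, 6 * min 1 (h*((n:ℝ)+1)) := by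
        rw [← Finset.sum_filter]
        have e : (range M).filter (fun n => n < x.natAbs) = range x.natAbs := by
          ext n
          simp only [Finset.mem_filter, Finset.mem_range]
          constructor
          · rintro ⟨_, hn⟩; exact hn
          · intro hn; exact ⟨lt_trans hn (hxM x hx), hn⟩
        rw [e, Finset.mul_sum]
      rw [hsub]
      exact mul_le_mul_of_nonneg_left (g_le h0 h1 x.natAbs) (hp0 x)
    have hminnn : ∀ n:ℕ, (0:ℝ) ≤ min 1 (h*((n:ℝ)+1)) := by
      intro n
      apply le_min zero_le_one
      positivity
    have stepB : ∑ x ∈ s, ∑ n ∈ range M, (if n < x.natAbs then p x * (6*min 1 (h*((n:ℝ)+1))) else 0)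
        ≤ ∑ n ∈ range M, 6 * (min 1 (h*((n:ℝ)+1)) * T n) := by
      rw [Finset.sum_comm]
      apply Finset.sum_le_sum
      intro n _
      have e : ∀ x:ℤ, (if n < x.natAbs then p x * (6*min 1 (h*((n:ℝ)+1))) else 0)
          = (if n < x.natAbs then p x else 0) * (6*min 1 (h*((n:ℝ)+1))) := by
        intro x; rw [ite_mul, zero_mul]
      rw [Finset.sum_congr rfl (fun x _ => e x), ← Finset.sum_mul]
      have hb0 : (0:ℝ) ≤ 6*min 1 (h*((n:ℝ)+1)) := by
        have := hminnn n; linarith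
      have hsle : ∑ x ∈ s, (if n < x.natAbs then p x else 0) ≤ T n :=
        Summable.sum_le_tsum s (fun x _ => by split <;> [exact hp0 x; exact le_refl 0]) (sumT n)
      calc (∑ x ∈ s, if n < x.natAbs then p x else 0) * (6*min 1 (h*((n:ℝ)+1)))
          ≤ T n * (6*min 1 (h*((n:ℝ)+1))) := mul_le_mul_of_nonneg_right hsle hb0
        _ = 6 * (min 1 (h*((n:ℝ)+1)) * T n) := by ring
    have stepC : ∀ n:ℕ, min 1 (h*((n:ℝ)+1)) * T n
        ≤ (if n ≤ N then K*h*((n:ℝ)+1)^(1-α) else 0)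
          + (if N < n then K*((n:ℝ)+1)^(-α) else 0) := by
      intro n
      have hn1p : (0:ℝ) < (n:ℝ)+1 := by positivity
      by_cases hnN : n ≤ N
      · rw [if_pos hnN, if_neg (not_lt.mpr hnN), add_zero]
        rcases Nat.eq_zero_or_pos n with rfl | hn1
        · have e1 : (((0:ℕ):ℝ)+1) ^ (1-α) = 1 := by
            norm_num
          have step : min 1 (h*(((0:ℕ):ℝ)+1)) * T 0 ≤ (h*(((0:ℕ):ℝ)+1)) * 1 :=
            mul_le_mul (min_le_right _ _) (Tle1 0) (T0 0) (by positivity)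
          rw [e1]
          push_cast at step ⊢
          nlinarith [hK1, h0]
        · have hTn := hTK n hn1
          have e : ((n:ℝ)+1) * ((n:ℝ)+1)^(-α) = ((n:ℝ)+1)^(1-α) := by
            rw [show (1:ℝ)-α = 1 + (-α) by ring, Real.rpow_add hn1p, Real.rpow_one]
          calc min 1 (h*((n:ℝ)+1)) * T n ≤ (h*((n:ℝ)+1)) * (K*((n:ℝ)+1)^(-α)) :=
                mul_le_mul (min_le_right _ _) hTn (T0 n) (by positivity)
            _ = K*h*(((n:ℝ)+1) * ((n:ℝ)+1)^(-α)) := by ring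
            _ = K*h*((n:ℝ)+1)^(1-α) := by rw [e]
      · rw [if_neg hnN, if_pos (not_le.mp hnN), zero_add]
        have hn1 : 1 ≤ n := le_trans hN1 (not_le.mp hnN).le
        calc min 1 (h*((n:ℝ)+1)) * T n ≤ 1 * T n :=
              mul_le_mul_of_nonneg_right (min_le_left _ _) (T0 n)
          _ = T n := one_mul _
          _ ≤ K*((n:ℝ)+1)^(-α) := hTK n hn1
    have sumv : ∑ n ∈ range M, (if n ≤ N then K*h*((n:ℝ)+1)^(1-α) else 0)
        ≤ K*h*(((N:ℝ)+1)^(2-α)/(2-α)) := by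
      rw [← Finset.sum_filter]
      have hsub2 : (range M).filter (fun n => n ≤ N) ⊆ range (N+1) := by
        intro n hn
        simp only [Finset.mem_filter, Finset.mem_range] at *
        omega
      calc ∑ n ∈ (range M).filter (fun n => n ≤ N), K*h*((n:ℝ)+1)^(1-α)
          ≤ ∑ n ∈ range (N+1), K*h*((n:ℝ)+1)^(1-α) :=
            Finset.sum_le_sum_of_subset_of_nonneg hsub2 (fun n _ _ => by positivity)
        _ = K*h* ∑ n ∈ range (N+1), ((n:ℝ)+1)^(1-α) := by rw [Finset.mul_sum]
        _ ≤ K*h*((((N+1:ℕ)):ℝ)^(2-α)/(2-α)) :=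
            mul_le_mul_of_nonneg_left (lemL1 hα hα2 (N+1)) (by positivity)
        _ = K*h*(((N:ℝ)+1)^(2-α)/(2-α)) := by push_cast; ring
    have sumw : ∑ n ∈ range M, (if N < n then K*((n:ℝ)+1)^(-α) else 0)
        ≤ K*(((N:ℝ)+1)^(1-α)/(α-1)) := by
      rw [← Finset.sum_filter]
      have e : (range M).filter (fun n => N < n) = Finset.Ico (N+1) M := by
        ext n
        simp only [Finset.mem_filter, Finset.mem_range, Finset.mem_Ico]
        omega
      rw [e]
      calc ∑ n ∈ Finset.Ico (N+1) M, K*((n:ℝ)+1)^(-α)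
          = K * ∑ n ∈ Finset.Ico (N+1) M, ((n:ℝ)+1)^(-α) := by rw [Finset.mul_sum]
        _ ≤ K * ((((N+1:ℕ)):ℝ)^(1-α)/(α-1)) :=
            mul_le_mul_of_nonneg_left (lemL2 hα hα2 (by omega) M) hK0
        _ = K*(((N:ℝ)+1)^(1-α)/(α-1)) := by push_cast; ring
    -- powers of h
    have hhe : h * h^(α-2) = h^(α-1) := by
      rw [show α-1 = 1+(α-2) by ring, Real.rpow_add h0, Real.rpow_one]
    have hA1 : ((N:ℝ)+1)^(2-α) ≤ 3 * h^(α-2) := by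
      calc ((N:ℝ)+1)^(2-α) ≤ (3/h)^(2-α) :=
            Real.rpow_le_rpow (by positivity) hNup (by linarith)
        _ = 3^(2-α) * (h^(2-α))⁻¹ := by
            rw [Real.div_rpow (by norm_num) h0.le, div_eq_mul_inv]
        _ = 3^(2-α) * h^(α-2) := by
            rw [← Real.rpow_neg h0.le, show -(2-α) = α-2 by ring]
        _ ≤ 3 * h^(α-2) := by
            apply mul_le_mul_of_nonneg_right _ (Real.rpow_nonneg h0.le _)
            calc (3:ℝ)^(2-α) ≤ (3:ℝ)^(1:ℝ) :=
                  Real.rpow_le_rpow_of_exponent_le (by norm_num) (by linarith)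
              _ = 3 := Real.rpow_one 3
    have hA2 : ((N:ℝ)+1)^(1-α) ≤ h^(α-1) := by
      calc ((N:ℝ)+1)^(1-α) ≤ (1/h)^(1-α) :=
            Real.rpow_le_rpow_of_nonpos (by positivity) (by linarith [hNle]) (by linarith)
        _ = h^(α-1) := by
            rw [one_div, Real.inv_rpow h0.le, ← Real.rpow_neg h0.le]
            congr 1
            ring
    -- assemble the key estimate
    have d1 : ((N:ℝ)+1)^(2-α)/(2-α) ≤ (3*h^(α-2))/(2-α) := by
      have := mul_le_mul_of_nonneg_right hA1 (le_of_lt (inv_pos.mpr h2mα))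
      simpa [div_eq_mul_inv] using this
    have d2 : ((N:ℝ)+1)^(1-α)/(α-1) ≤ h^(α-1)/(α-1) := by
      have := mul_le_mul_of_nonneg_right hA2 (le_of_lt (inv_pos.mpr hαm1))
      simpa [div_eq_mul_inv] using this
    calc ∑ x ∈ s, p x * ((x.natAbs:ℝ) * min 2 (h*(x.natAbs:ℝ)))
        ≤ ∑ x ∈ s, ∑ n ∈ range M, (if n < x.natAbs then p x * (6*min 1 (h*((n:ℝ)+1))) else 0) :=
          Finset.sum_le_sum stepA
      _ ≤ ∑ n ∈ range M, 6*(min 1 (h*((n:ℝ)+1)) * T n) := stepB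
      _ ≤ ∑ n ∈ range M, 6*((if n ≤ N then K*h*((n:ℝ)+1)^(1-α) else 0)
            + (if N < n then K*((n:ℝ)+1)^(-α) else 0)) :=
          Finset.sum_le_sum (fun n _ => by have := stepC n; linarith)
      _ = 6*((∑ n ∈ range M, (if n ≤ N then K*h*((n:ℝ)+1)^(1-α) else 0))
            + ∑ n ∈ range M, (if N < n then K*((n:ℝ)+1)^(-α) else 0)) := by
          rw [← Finset.sum_add_distrib, ← Finset.mul_sum]
      _ ≤ 6*(K*h*(((N:ℝ)+1)^(2-α)/(2-α)) + K*(((N:ℝ)+1)^(1-α)/(α-1))) := by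
          have hs1 := sumv; have hs2 := sumw; linarith
      _ ≤ 6*(K*h*((3*h^(α-2))/(2-α)) + K*(h^(α-1)/(α-1))) := by
          have u1 := mul_le_mul_of_nonneg_left d1 (by positivity : (0:ℝ) ≤ K*h)
          have u2 := mul_le_mul_of_nonneg_left d2 hK0
          linarith
      _ = 6*C₁*h^(α-1) := by
          rw [hC₁def, ← hhe]; ring
  -- summability of |x| p(x)
  have hcommon : ∀ m:ℕ, (m:ℝ) ≤ (m:ℝ) * min 2 ((1:ℝ)*(m:ℝ)) := by
    intro m
    rcases Nat.eq_zero_or_pos m with rfl | hm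
    · simp
    · have h1m : (1:ℝ) ≤ (m:ℝ) := by exact_mod_cast hm
      have : (1:ℝ) ≤ min 2 (1*(m:ℝ)) := le_min (by norm_num) (by linarith)
      nlinarith
  have hAle : ∀ s : Finset ℤ, ∑ x ∈ s, p x * (x.natAbs:ℝ) ≤ 6*C₁ := by
    intro s
    calc ∑ x ∈ s, p x * (x.natAbs:ℝ)
        ≤ ∑ x ∈ s, p x * ((x.natAbs:ℝ) * min 2 ((1:ℝ)*(x.natAbs:ℝ))) :=
          Finset.sum_le_sum (fun x _ => mul_le_mul_of_nonneg_left (hcommon x.natAbs) (hp0 x))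
      _ ≤ 6*C₁*(1:ℝ)^(α-1) := key 1 one_pos le_rfl s
      _ = 6*C₁ := by rw [Real.one_rpow, mul_one]
  have hA0 : ∀ x:ℤ, 0 ≤ p x * (x.natAbs:ℝ) := fun x => mul_nonneg (hp0 x) (Nat.cast_nonneg _)
  have hsumA : Summable (fun x:ℤ => p x * (x.natAbs:ℝ)) :=
    summable_of_sum_le (fun x => hA0 x) hAle
  have htsumA : ∑' x:ℤ, p x * (x.natAbs:ℝ) ≤ 6*C₁ := Summable.tsum_le_of_sum_le hsumA hAle
  -- the derivative of the characteristic function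
  have hnormf' : ∀ (θ:ℝ) (x:ℤ), ‖(p x:ℂ) * (Complex.exp (Complex.I*θ*x) * (Complex.I*x))‖
      = p x * (x.natAbs:ℝ) := by
    intro θ x
    rw [norm_mul, norm_mul, norm_mul]
    have h1 : ‖(p x:ℂ)‖ = p x := by
      rw [Complex.norm_real, Real.norm_eq_abs, abs_of_nonneg (hp0 x)]
    have h2 : ‖Complex.exp (Complex.I*θ*x)‖ = 1 := by
      have e : Complex.I*(θ:ℂ)*(x:ℂ) = ((θ*x : ℝ):ℂ) * Complex.I := by push_cast; ring
      rw [e, Complex.norm_exp_ofReal_mul_I]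
    have h4 : ‖((x:ℤ):ℂ)‖ = (x.natAbs:ℝ) := by
      rw [Complex.norm_intCast, Nat.cast_natAbs, Int.cast_abs]
    rw [h1, h2, Complex.norm_I, h4]
    ring
  have hnormf : ∀ (θ:ℝ) (x:ℤ), ‖(p x:ℂ) * Complex.exp (Complex.I*θ*x)‖ = p x := by
    intro θ x
    rw [norm_mul]
    have h1 : ‖(p x:ℂ)‖ = p x := by
      rw [Complex.norm_real, Real.norm_eq_abs, abs_of_nonneg (hp0 x)]
    have h2 : ‖Complex.exp (Complex.I*θ*x)‖ = 1 := by
      have e : Complex.I*(θ:ℂ)*(x:ℂ) = ((θ*x : ℝ):ℂ) * Complex.I := by push_cast; ring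
      rw [e, Complex.norm_exp_ofReal_mul_I]
    rw [h1, h2, mul_one]
  have hderiv : ∀ θ:ℝ, HasDerivAt (rwChar p)
      (∑' x:ℤ, (p x:ℂ) * (Complex.exp (Complex.I*θ*x) * (Complex.I*x))) θ := by
    intro θ
    have hg : ∀ (x:ℤ) (t:ℝ), HasDerivAt (fun t:ℝ => (p x:ℂ) * Complex.exp (Complex.I*t*x))
        ((p x:ℂ) * (Complex.exp (Complex.I*t*x) * (Complex.I*x))) t := by
      intro x t
      have h1 : HasDerivAt (fun z:ℂ => Complex.I*z*(x:ℂ)) (Complex.I*(x:ℂ)) ((t:ℝ):ℂ) := by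
        simpa using ((hasDerivAt_id ((t:ℝ):ℂ)).const_mul Complex.I).mul_const (x:ℂ)
      exact (h1.cexp.const_mul ((p x : ℝ):ℂ)).comp_ofReal
    have hg0 : Summable (fun x:ℤ => (p x:ℂ) * Complex.exp (Complex.I*(0:ℝ)*x)) := by
      apply Summable.of_norm
      exact hsump.congr (fun x => (hnormf 0 x).symm)
    have H := hasDerivAt_tsum (u := fun x:ℤ => p x * (x.natAbs:ℝ)) hsumA hg
      (fun x t => le_of_eq (hnormf' t x)) hg0 θ
    exact H
  have hDeq : ∀ θ:ℝ, deriv (rwChar p) θ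
      = ∑' x:ℤ, (p x:ℂ) * (Complex.exp (Complex.I*θ*x) * (Complex.I*x)) :=
    fun θ => (hderiv θ).deriv
  have hsumd : ∀ θ:ℝ, Summable (fun x:ℤ =>
      (p x:ℂ) * (Complex.exp (Complex.I*θ*x) * (Complex.I*x))) := by
    intro θ
    apply Summable.of_norm
    exact hsumA.congr (fun x => (hnormf' θ x).symm)
  -- conclusion
  refine ⟨24*C₁ + 1, ?_⟩
  intro θ θ'
  rw [hDeq θ, hDeq θ']
  set h' : ℝ := |θ - θ'| with hh'def
  have hh'0 : (0:ℝ) ≤ h' := abs_nonneg _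
  have hsub : (∑' x:ℤ, (p x:ℂ) * (Complex.exp (Complex.I*θ*x) * (Complex.I*x)))
      - (∑' x:ℤ, (p x:ℂ) * (Complex.exp (Complex.I*θ'*x) * (Complex.I*x)))
      = ∑' x:ℤ, ((p x:ℂ) * (Complex.exp (Complex.I*θ*x) * (Complex.I*x))
          - (p x:ℂ) * (Complex.exp (Complex.I*θ'*x) * (Complex.I*x))) :=
    ((hsumd θ).hasSum.sub (hsumd θ').hasSum).tsum_eq.symm
  rw [hsub]
  have hbound : ∀ x:ℤ, ‖(p x:ℂ) * (Complex.exp (Complex.I*θ*x) * (Complex.I*x))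
      - (p x:ℂ) * (Complex.exp (Complex.I*θ'*x) * (Complex.I*x))‖
      ≤ p x * ((x.natAbs:ℝ) * min 2 ((2*h')*(x.natAbs:ℝ))) := by
    intro x
    have e : (p x:ℂ) * (Complex.exp (Complex.I*θ*x) * (Complex.I*x))
        - (p x:ℂ) * (Complex.exp (Complex.I*θ'*x) * (Complex.I*x))
        = ((p x:ℂ) * ((x:ℤ):ℂ) * Complex.I)
          * (Complex.exp (Complex.I*θ*x) - Complex.exp (Complex.I*θ'*x)) := by ring
    rw [e, norm_mul]
    have h1 : ‖(p x:ℂ) * ((x:ℤ):ℂ) * Complex.I‖ = p x * (x.natAbs:ℝ) := by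
      rw [norm_mul, norm_mul, Complex.norm_I, Complex.norm_real, Real.norm_eq_abs,
        abs_of_nonneg (hp0 x), Complex.norm_intCast, Nat.cast_natAbs, Int.cast_abs, mul_one]
    rw [h1]
    have h2 := expdiff θ θ' x
    have e2 : min 2 (2*|θ-θ'| * (x.natAbs:ℝ)) = min 2 ((2*h')*(x.natAbs:ℝ)) := by
      rw [hh'def]
    rw [e2] at h2
    calc p x * (x.natAbs:ℝ) * ‖Complex.exp (Complex.I*θ*x) - Complex.exp (Complex.I*θ'*x)‖
        ≤ p x * (x.natAbs:ℝ) * min 2 ((2*h')*(x.natAbs:ℝ)) :=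
          mul_le_mul_of_nonneg_left h2 (hA0 x)
      _ = p x * ((x.natAbs:ℝ) * min 2 ((2*h')*(x.natAbs:ℝ))) := by ring
  have hminle2 : ∀ x:ℤ, p x * ((x.natAbs:ℝ) * min 2 ((2*h')*(x.natAbs:ℝ)))
      ≤ 2 * (p x * (x.natAbs:ℝ)) := by
    intro x
    have : (x.natAbs:ℝ) * min 2 ((2*h')*(x.natAbs:ℝ)) ≤ (x.natAbs:ℝ) * 2 :=
      mul_le_mul_of_nonneg_left (min_le_left _ _) (Nat.cast_nonneg _)
    nlinarith [hp0 x, this, mul_le_mul_of_nonneg_left this (hp0 x)]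
  have hminnn : ∀ x:ℤ, 0 ≤ p x * ((x.natAbs:ℝ) * min 2 ((2*h')*(x.natAbs:ℝ))) := by
    intro x
    apply mul_nonneg (hp0 x)
    apply mul_nonneg (Nat.cast_nonneg _)
    apply le_min (by norm_num)
    positivity
  have hsumG : Summable (fun x:ℤ => p x * ((x.natAbs:ℝ) * min 2 ((2*h')*(x.natAbs:ℝ)))) :=
    (hsumA.mul_left 2).of_nonneg_of_le hminnn hminle2
  have hsumnorm : Summable (fun x:ℤ => ‖(p x:ℂ) * (Complex.exp (Complex.I*θ*x) * (Complex.I*x))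
      - (p x:ℂ) * (Complex.exp (Complex.I*θ'*x) * (Complex.I*x))‖) := by
    apply hsumG.of_nonneg_of_le (fun x => norm_nonneg _) hbound
  have habs_le : ‖∑' x:ℤ, ((p x:ℂ) * (Complex.exp (Complex.I*θ*x) * (Complex.I*x))
      - (p x:ℂ) * (Complex.exp (Complex.I*θ'*x) * (Complex.I*x)))‖
      ≤ ∑' x:ℤ, p x * ((x.natAbs:ℝ) * min 2 ((2*h')*(x.natAbs:ℝ))) := by
    calc ‖∑' x:ℤ, ((p x:ℂ) * (Complex.exp (Complex.I*θ*x) * (Complex.I*x))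
        - (p x:ℂ) * (Complex.exp (Complex.I*θ'*x) * (Complex.I*x)))‖
        ≤ ∑' x:ℤ, ‖(p x:ℂ) * (Complex.exp (Complex.I*θ*x) * (Complex.I*x))
          - (p x:ℂ) * (Complex.exp (Complex.I*θ'*x) * (Complex.I*x))‖ :=
          norm_tsum_le_tsum_norm hsumnorm
      _ ≤ ∑' x:ℤ, p x * ((x.natAbs:ℝ) * min 2 ((2*h')*(x.natAbs:ℝ))) :=
          Summable.tsum_le_tsum hbound hsumnorm hsumG
  have hrpow0 : (0:ℝ) ≤ h'^(α-1) := Real.rpow_nonneg hh'0 _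
  rcases eq_or_lt_of_le hh'0 with heq | hpos
  · -- θ = θ'
    have hθ : θ = θ' := by
      have h0' : |θ - θ'| = 0 := by rw [← hh'def, ← heq]
      have := abs_eq_zero.mp h0'
      linarith [sub_eq_zero.mp this]
    subst hθ
    simp only [sub_self]
    rw [tsum_zero]
    simp only [norm_zero]
    positivity
  · rcases le_or_gt h' (1/2) with hsmall | hbig
    · have h2pos : (0:ℝ) < 2*h' := by linarith
      have h2le : 2*h' ≤ 1 := by linarith
      have hG : ∑' x:ℤ, p x * ((x.natAbs:ℝ) * min 2 ((2*h')*(x.natAbs:ℝ)))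
          ≤ 6*C₁*(2*h')^(α-1) :=
        Summable.tsum_le_of_sum_le hsumG (key (2*h') h2pos h2le)
      have hpow : (2*h')^(α-1) = 2^(α-1) * h'^(α-1) := Real.mul_rpow (by norm_num) hh'0
      have h2b : (2:ℝ)^(α-1) ≤ 2 := by
        calc (2:ℝ)^(α-1) ≤ (2:ℝ)^(1:ℝ) :=
              Real.rpow_le_rpow_of_exponent_le (by norm_num) (by linarith)
          _ = 2 := Real.rpow_one 2
      have : 6*C₁*(2*h')^(α-1) ≤ (24*C₁+1) * h'^(α-1) := by
        rw [hpow]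
        nlinarith [mul_le_mul_of_nonneg_right h2b hrpow0, hC₁0, hrpow0]
      linarith [habs_le, hG]
    · have hB1 : ∑' x:ℤ, p x * ((x.natAbs:ℝ) * min 2 ((2*h')*(x.natAbs:ℝ)))
          ≤ 2 * (6*C₁) := by
        calc ∑' x:ℤ, p x * ((x.natAbs:ℝ) * min 2 ((2*h')*(x.natAbs:ℝ)))
            ≤ ∑' x:ℤ, 2 * (p x * (x.natAbs:ℝ)) :=
              Summable.tsum_le_tsum hminle2 hsumG (hsumA.mul_left 2)
          _ = 2 * ∑' x:ℤ, p x * (x.natAbs:ℝ) := tsum_mul_left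
          _ ≤ 2 * (6*C₁) := by linarith [htsumA]
      have hhalf : (1:ℝ)/2 ≤ h'^(α-1) := by
        calc (1:ℝ)/2 = ((1:ℝ)/2)^(1:ℝ) := (Real.rpow_one _).symm
          _ ≤ ((1:ℝ)/2)^(α-1) :=
              Real.rpow_le_rpow_of_exponent_ge (by norm_num) (by norm_num) (by linarith)
          _ ≤ h'^(α-1) := Real.rpow_le_rpow (by norm_num) hbig.le (by linarith)
      have : 2*(6*C₁) ≤ (24*C₁+1) * h'^(α-1) := by nlinarith [hC₁0, hrpow0]
      linarith [habs_le]
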